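/- Let λ₁, …, λ_n be real numbers and let s = diag(λ₁, …, λ_n) ∈ M_n(ℂ). Then the matrix exponential exp : M_n(ℂ) → M_n(ℂ) is Fréchet differentiable at s, and its derivative at s applied to a direction h ∈ M_n(ℂ) is the matrix whose (a,b)-entry equals h_{ab} · (e^{λ_a} − e^{λ_b})/(λ_a − λ_b) when λ_a ≠ λ_b, and equals e^{λ_a} · h_{ab} when λ_a = λ_b. -/

import Mathlib

open Matrix
open scoped Nat

set_option linter.unusedSectionVars false
open scoped Nat

set_option linter.unusedSectionVars false

section AuxExpDeriv

variable {A : Type*} [NormedRing A] [NormedAlgebra ℂ A] [CompleteSpace A]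

/-- The derivative of `y ↦ y ^ k` at `x`, as a continuous linear map. -/
noncomputable def expDerivTerm (x : A) (k : ℕ) : A →L[ℂ] A :=
  ∑ i ∈ Finset.range k, ContinuousLinearMap.mulLeftRight ℂ A (x ^ i) (x ^ (k - 1 - i))

lemma hasFDerivAt_pow_aux (k : ℕ) (x : A) :
    HasFDerivAt (fun y : A => y ^ k) (expDerivTerm x k) x := by
  induction k with
  | zero => simpa [expDerivTerm] using (hasFDerivAt_const (1 : A) x)
  | succ k ih =>
    have h := ih.mul' (hasFDerivAt_id x)
    simp only [id] at h
    have he : (fun y : A => y ^ k * y) = fun y : A => y ^ (k + 1) := by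
      funext y; rw [pow_succ]
    rw [show ((fun y : A => y ^ k) * id) = fun y : A => y ^ k * y from rfl, he] at h
    refine h.congr_fderiv (Eq.symm ?_)
    refine ContinuousLinearMap.ext fun v => ?_
    simp only [expDerivTerm, ContinuousLinearMap.sum_apply,
      ContinuousLinearMap.mulLeftRight_apply, ContinuousLinearMap.add_apply,
      ContinuousLinearMap.smul_apply, ContinuousLinearMap.coe_id', id_eq,
      ContinuousLinearMap.smulRight_apply, smul_eq_mul, Nat.add_sub_cancel, op_smul_eq_mul]
    rw [Finset.sum_range_succ, Nat.sub_self, pow_zero, mul_one, Finset.sum_mul,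
      add_comm (x ^ k * v)]
    congr 1
    refine Finset.sum_congr rfl fun i hi => ?_
    have hik := Finset.mem_range.mp hi
    rw [show k - i = k - 1 - i + 1 by omega, pow_succ, ← mul_assoc]

lemma norm_pow_le_aux {R : ℝ} (hR : 1 ≤ R) {x : A} (hx : ‖x‖ ≤ R) (i : ℕ) :
    ‖x ^ i‖ ≤ (‖(1 : A)‖ + 1) * R ^ i := by
  cases i with
  | zero => simpa using by linarith [norm_nonneg (1 : A)]
  | succ j =>
    calc ‖x ^ (j + 1)‖ ≤ ‖x‖ ^ (j + 1) := norm_pow_le' x j.succ_pos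
      _ ≤ R ^ (j + 1) := pow_le_pow_left₀ (norm_nonneg x) hx _
      _ ≤ (‖(1 : A)‖ + 1) * R ^ (j + 1) :=
        le_mul_of_one_le_left (by positivity) (by linarith [norm_nonneg (1 : A)])

lemma norm_expDerivTerm_le {R : ℝ} (hR : 1 ≤ R) {x : A} (hx : ‖x‖ ≤ R) (k : ℕ) :
    ‖expDerivTerm x k‖ ≤ k * ((‖(1 : A)‖ + 1) ^ 2 * R ^ k) := by
  set C := ‖(1 : A)‖ + 1 with hC
  have hC1 : (1 : ℝ) ≤ C := by have := norm_nonneg (1 : A); linarith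
  have hC0 : (0 : ℝ) ≤ C := by linarith
  have hR0 : (0 : ℝ) ≤ R := by linarith
  calc ‖expDerivTerm x k‖
      ≤ ∑ i ∈ Finset.range k,
        ‖ContinuousLinearMap.mulLeftRight ℂ A (x ^ i) (x ^ (k - 1 - i))‖ :=
        norm_sum_le _ _
    _ ≤ ∑ i ∈ Finset.range k, C ^ 2 * R ^ k := by
        refine Finset.sum_le_sum fun i hi => ?_
        have hik := Finset.mem_range.mp hi
        calc ‖ContinuousLinearMap.mulLeftRight ℂ A (x ^ i) (x ^ (k - 1 - i))‖
            ≤ ‖x ^ i‖ * ‖x ^ (k - 1 - i)‖ :=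
              ContinuousLinearMap.opNorm_mulLeftRight_apply_apply_le ℂ A _ _
          _ ≤ (C * R ^ i) * (C * R ^ (k - 1 - i)) := by
              exact mul_le_mul (norm_pow_le_aux hR hx i) (norm_pow_le_aux hR hx _)
                (norm_nonneg _) (by positivity)
          _ = C ^ 2 * R ^ (i + (k - 1 - i)) := by rw [pow_add]; ring
          _ ≤ C ^ 2 * R ^ k := by
              have h1 : i + (k - 1 - i) ≤ k := by omega
              have := pow_le_pow_right₀ hR h1
              nlinarith [sq_nonneg C]
    _ = k * (C ^ 2 * R ^ k) := by
        rw [Finset.sum_const, Finset.card_range, nsmul_eq_mul]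

lemma summable_u_aux (C R : ℝ) :
    Summable (fun k : ℕ => ((k ! : ℝ))⁻¹ * (k * (C * R ^ k))) := by
  refine (summable_nat_add_iff 1).1
    (Summable.congr (((Real.summable_pow_div_factorial R).mul_left (C * R))) ?_)
  intro k
  have h1 : ((k + 1)! : ℝ) = (k + 1) * (k ! : ℝ) := by exact_mod_cast Nat.factorial_succ k
  have h2 : ((k ! : ℝ)) ≠ 0 := Nat.cast_ne_zero.2 k.factorial_ne_zero
  have h3 : ((k : ℝ) + 1) ≠ 0 := by positivity
  push_cast [h1]
  field_simp
  ring

end AuxExpDeriv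

section AuxMain

variable {A : Type*} [NormedRing A] [NormedAlgebra ℂ A] [CompleteSpace A]

lemma exp_hasFDerivAt_aux (s : A) :
    HasFDerivAt (NormedSpace.exp) (∑' k : ℕ, (k !⁻¹ : ℂ) • expDerivTerm s k) s ∧
    HasSum (fun k : ℕ => (k !⁻¹ : ℂ) • expDerivTerm s k)
      (∑' k : ℕ, (k !⁻¹ : ℂ) • expDerivTerm s k) := by
  set R : ℝ := ‖s‖ + 1 with hRdef
  have hR : (1 : ℝ) ≤ R := le_add_of_nonneg_left (norm_nonneg s)
  set C : ℝ := (‖(1 : A)‖ + 1) ^ 2 with hCdef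
  set u : ℕ → ℝ := fun k => ((k ! : ℝ))⁻¹ * (k * (C * R ^ k)) with hu_def
  have hu : Summable u := summable_u_aux C R
  have hball : s ∈ Metric.ball (0 : A) R := by
    simp [hRdef, mem_ball_zero_iff]
  have hbound : ∀ (k : ℕ) (x : A), x ∈ Metric.ball (0 : A) R →
      ‖(k !⁻¹ : ℂ) • expDerivTerm x k‖ ≤ u k := by
    intro k x hx
    have hxR : ‖x‖ ≤ R := le_of_lt (mem_ball_zero_iff.mp hx)
    have h1 : ‖(k !⁻¹ : ℂ) • expDerivTerm x k‖ = ((k ! : ℝ))⁻¹ * ‖expDerivTerm x k‖ := by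
      rw [norm_smul ((k !⁻¹ : ℂ)) (expDerivTerm x k), norm_inv]
      norm_num
    rw [h1, hu_def]
    have h2 := norm_expDerivTerm_le hR hxR k
    have h3 : (0:ℝ) ≤ ((k ! : ℝ))⁻¹ := by positivity
    calc ((k ! : ℝ))⁻¹ * ‖expDerivTerm x k‖ ≤ ((k ! : ℝ))⁻¹ * (k * (C * R ^ k)) := by
          refine mul_le_mul_of_nonneg_left ?_ h3
          simpa [hCdef] using h2
      _ = _ := rfl
  constructor
  · rw [NormedSpace.exp_eq_tsum (𝕂 := ℂ)]
    exact hasFDerivAt_tsum_of_isPreconnected hu Metric.isOpen_ball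
      ((convex_ball (0 : A) R).isPreconnected)
      (fun k x _ => (hasFDerivAt_pow_aux k x).const_smul ((k !⁻¹ : ℂ)))
      hbound hball (NormedSpace.expSeries_summable' s) hball
  · exact (Summable.of_norm_bounded hu fun k => hbound k s hball).hasSum

end AuxMain


attribute [local instance] Matrix.frobeniusNormedAddCommGroup Matrix.frobeniusNormedSpace

/-- let `λ₁, …, λₙ` be real numbers and `s = diag(λ₁, …, λₙ)` in `M_n(ℂ)`.
Then the matrix exponential is Fréchet differentiable at `s`, and its derivative at `s`
applied to a direction `h` is the matrix with `(a, b)`-entry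
`h a b * (e^(λ a) - e^(λ b))/(λ a - λ b)` when `λ a ≠ λ b`, and `e^(λ a) * h a b`
when `λ a = λ b`. -/
theorem hasFDerivAt_exp_diagonal {n : ℕ} (lam : Fin n → ℝ)
    (s : Matrix (Fin n) (Fin n) ℂ) (hsd : s = Matrix.diagonal fun a => (lam a : ℂ)) :
    ∃ D : Matrix (Fin n) (Fin n) ℂ →L[ℂ] Matrix (Fin n) (Fin n) ℂ,
      HasFDerivAt (NormedSpace.exp) D s ∧
      ∀ (h : Matrix (Fin n) (Fin n) ℂ) (a b : Fin n),
        D h a b =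
          if lam a = lam b then Complex.exp (lam a) * h a b
          else h a b * ((Complex.exp (lam a) - Complex.exp (lam b)) / ((lam a : ℂ) - lam b)) := by
  letI : NormedRing (Matrix (Fin n) (Fin n) ℂ) := Matrix.frobeniusNormedRing
  letI : NormedAlgebra ℂ (Matrix (Fin n) (Fin n) ℂ) := Matrix.frobeniusNormedAlgebra
  obtain ⟨hD, hSum⟩ := exp_hasFDerivAt_aux s
  set D := ∑' k : ℕ, (k !⁻¹ : ℂ) • expDerivTerm s k with hDdef
  refine ⟨D, hD, ?_⟩
  intro h a b
  -- push the `HasSum` through evaluation at `h` and at entry `(a, b)`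
  have happ : HasSum (fun k : ℕ => ((k !⁻¹ : ℂ) • expDerivTerm s k) h) (D h) :=
    hSum.mapL (ContinuousLinearMap.apply ℂ _ h)
  let E : Matrix (Fin n) (Fin n) ℂ →L[ℂ] ℂ :=
    LinearMap.toContinuousLinearMap
      { toFun := fun M => M a b
        map_add' := fun _ _ => rfl
        map_smul' := fun _ _ => rfl }
  have hE : ∀ M : Matrix (Fin n) (Fin n) ℂ, E M = M a b := fun _ => rfl
  have he : HasSum (fun k : ℕ => (((k !⁻¹ : ℂ) • expDerivTerm s k) h) a b) (D h a b) := by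
    have := happ.mapL E
    simpa only [hE] using this
  -- compute the terms
  set g : ℕ → ℂ := fun k => ∑ i ∈ Finset.range k, (lam a : ℂ) ^ i * (lam b : ℂ) ^ (k - 1 - i)
    with hgdef
  have hterm : ∀ k : ℕ, (((k !⁻¹ : ℂ) • expDerivTerm s k) h) a b
      = (k !⁻¹ : ℂ) * g k * h a b := by
    intro k
    simp only [ContinuousLinearMap.smul_apply, Matrix.smul_apply, smul_eq_mul, expDerivTerm,
      ContinuousLinearMap.sum_apply, ContinuousLinearMap.mulLeftRight_apply, Matrix.sum_apply,
      hsd, Matrix.diagonal_pow, Matrix.mul_diagonal, Matrix.diagonal_mul, Pi.pow_apply, hgdef]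
    rw [mul_assoc, Finset.sum_mul]
    congr 1
    exact Finset.sum_congr rfl fun i _ => by ring
  have hT : HasSum (fun k : ℕ => (k !⁻¹ : ℂ) * g k * h a b) (D h a b) := by
    simpa only [hterm] using he
  by_cases hab : lam a = lam b
  · rw [if_pos hab]
    have hb' : (lam b : ℂ) = (lam a : ℂ) := by rw [hab]
    have hg : ∀ k : ℕ, g k = (k : ℂ) * (lam a : ℂ) ^ (k - 1) := by
      intro k
      rw [hgdef]
      calc (∑ i ∈ Finset.range k, (lam a : ℂ) ^ i * (lam b : ℂ) ^ (k - 1 - i))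
          = ∑ i ∈ Finset.range k, (lam a : ℂ) ^ (k - 1) := by
            refine Finset.sum_congr rfl fun i hi => ?_
            have hik := Finset.mem_range.mp hi
            rw [hb', ← pow_add, show i + (k - 1 - i) = k - 1 by omega]
        _ = (k : ℂ) * (lam a : ℂ) ^ (k - 1) := by
            rw [Finset.sum_const, Finset.card_range, nsmul_eq_mul]
    have H : HasSum (fun k : ℕ => (k !⁻¹ : ℂ) • ((lam a : ℂ)) ^ k)
        (NormedSpace.exp ((lam a : ℂ))) := NormedSpace.exp_series_hasSum_exp' _
    have H2 : HasSum (fun k : ℕ => (k !⁻¹ : ℂ) * ((lam a : ℂ)) ^ k * h a b)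
        (NormedSpace.exp ((lam a : ℂ)) * h a b) := by
      simpa only [smul_eq_mul] using H.mul_right (h a b)
    have hTsucc : ∀ k : ℕ, ((k + 1 : ℕ) !⁻¹ : ℂ) * g (k + 1) * h a b
        = (k !⁻¹ : ℂ) * ((lam a : ℂ)) ^ k * h a b := by
      intro k
      rw [hg (k + 1)]
      have hf : (((k + 1 : ℕ)! : ℂ)) = ((k : ℂ) + 1) * ((k ! : ℂ)) := by
        push_cast [Nat.factorial_succ]; ring
      have h2 : ((k ! : ℂ)) ≠ 0 := Nat.cast_ne_zero.2 k.factorial_ne_zero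
      have h3 : ((k : ℂ) + 1) ≠ 0 := Nat.cast_add_one_ne_zero k
      rw [hf]
      push_cast
      field_simp
    have H3 : HasSum (fun k : ℕ => ((k + 1 : ℕ) !⁻¹ : ℂ) * g (k + 1) * h a b)
        (NormedSpace.exp ((lam a : ℂ)) * h a b) := by
      simpa only [hTsucc] using H2
    have H4 := (hasSum_nat_add_iff (f := fun k : ℕ => (k !⁻¹ : ℂ) * g k * h a b) 1).1 H3
    have hg0 : g 0 = 0 := by simp [hgdef]
    rw [Complex.exp_eq_exp_ℂ]
    refine hT.unique ?_
    simpa [hg0] using H4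
  · rw [if_neg hab]
    have hC : (lam a : ℂ) ≠ (lam b : ℂ) := fun hc => hab (Complex.ofReal_inj.mp hc)
    have hd : (lam a : ℂ) - (lam b : ℂ) ≠ 0 := sub_ne_zero.2 hC
    have hg : ∀ k : ℕ, g k = ((lam a : ℂ) ^ k - (lam b : ℂ) ^ k) / ((lam a : ℂ) - (lam b : ℂ)) := by
      intro k
      rw [hgdef, eq_div_iff hd]
      exact geom_sum₂_mul _ _ k
    have Ha : HasSum (fun k : ℕ => (k !⁻¹ : ℂ) • ((lam a : ℂ)) ^ k)
        (NormedSpace.exp ((lam a : ℂ))) := NormedSpace.exp_series_hasSum_exp' _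
    have Hb : HasSum (fun k : ℕ => (k !⁻¹ : ℂ) • ((lam b : ℂ)) ^ k)
        (NormedSpace.exp ((lam b : ℂ))) := NormedSpace.exp_series_hasSum_exp' _
    have H := ((Ha.sub Hb).div_const ((lam a : ℂ) - (lam b : ℂ))).mul_right (h a b)
    have hfe : ∀ k : ℕ, ((k !⁻¹ : ℂ) • ((lam a : ℂ)) ^ k - (k !⁻¹ : ℂ) • ((lam b : ℂ)) ^ k)
        / ((lam a : ℂ) - (lam b : ℂ)) * h a b = (k !⁻¹ : ℂ) * g k * h a b := by
      intro k
      rw [hg k]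
      simp only [smul_eq_mul]
      ring
    have H' : HasSum (fun k : ℕ => (k !⁻¹ : ℂ) * g k * h a b)
        ((NormedSpace.exp ((lam a : ℂ)) - NormedSpace.exp ((lam b : ℂ)))
          / ((lam a : ℂ) - (lam b : ℂ)) * h a b) := by
      simpa only [hfe] using H
    rw [Complex.exp_eq_exp_ℂ]
    refine (hT.unique H').trans ?_
    ring
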